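/- For positive integers p and q with p + q ≤ n + 1, the endpoint rule f^{p,q} is well-defined: for every profile S of n bounded nonempty open intervals of ℝ, the p-th smallest lower endpoint is strictly less than the q-th largest upper endpoint, so f^{p,q}(S) is a bounded nonempty open interval. -/

import Mathlib

/-- A bounded open nonempty interval of ℝ, given by endpoints `lo < hi`. -/
structure OInt where
  lo : ℝ
  hi : ℝ
  lt : lo < hi

/-- The set of points of the interval. -/
def OInt.toSet (I : OInt) : Set ℝ := Set.Ioo I.lo I.hi

/-- Number of agents whose interval contains a point ≤ x, i.e. |{i : (-∞,x] ∩ S_i ≠ ∅}|. -/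
noncomputable def lowCount {n : ℕ} (S : Fin n → OInt) (x : ℝ) : ℕ :=
  (Finset.univ.filter fun i => (S i).lo < x).card

/-- Number of agents whose interval contains a point ≥ x, i.e. |{i : [x,∞) ∩ S_i ≠ ∅}|. -/
noncomputable def highCount {n : ℕ} (S : Fin n → OInt) (x : ℝ) : ℕ :=
  (Finset.univ.filter fun i => x < (S i).hi).card

/-- The endpoint rule f^{p,q}, as a set:
    {x : |{i : (-∞,x] ∩ S_i ≠ ∅}| ≥ p and |{i : [x,∞) ∩ S_i ≠ ∅}| ≥ q}. -/
def eprSet {n : ℕ} (p q : ℕ) (S : Fin n → OInt) : Set ℝ :=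
  {x | p ≤ lowCount S x ∧ q ≤ highCount S x}

/-- The k-th smallest (1-indexed) value of a finite family of reals. -/
noncomputable def kthSmall {n : ℕ} (a : Fin n → ℝ) (k : ℕ) : ℝ :=
  (List.insertionSort (· ≤ ·) (List.ofFn a)).getD (k - 1) 0

/-- The k-th largest (1-indexed) value of a finite family of reals. -/
noncomputable def kthLarge {n : ℕ} (a : Fin n → ℝ) (k : ℕ) : ℝ :=
  (List.insertionSort (· ≤ ·) (List.ofFn a)).getD (n - k) 0

theorem card_eq_countP (n : ℕ) (a : Fin n → ℝ) (p : ℝ → Prop) [DecidablePred p] :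
    (Finset.univ.filter fun i => p (a i)).card = (List.ofFn a).countP (fun y => decide (p y)) := by
  rw [List.ofFn_eq_map, List.countP_map, List.countP_eq_length_filter]
  simp [Fin.univ_def, Finset.filter, Finset.card, Function.comp_def]

theorem sorted_getElem_le {l : List ℝ} (hs : l.Pairwise (· ≤ ·)) {i j : ℕ}
    (hij : i ≤ j) (hj : j < l.length) : l[i]'(lt_of_le_of_lt hij hj) ≤ l[j] := by
  rcases lt_or_eq_of_le hij with h | h
  · exact (List.pairwise_iff_getElem.mp hs) i j _ hj h
  · subst h; rfl

theorem countP_lt_iff {l : List ℝ} (hs : l.Pairwise (· ≤ ·)) {k : ℕ} (hk : k < l.length)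
    (x : ℝ) : k < l.countP (fun y => decide (y < x)) ↔ l[k] < x := by
  constructor
  · intro h
    by_contra hx
    push_neg at hx
    have hsplit : l.countP (fun y => decide (y < x)) =
        (l.take k).countP (fun y => decide (y < x)) +
        (l.drop k).countP (fun y => decide (y < x)) := by
      rw [← List.countP_append, List.take_append_drop]
    have hdrop : (l.drop k).countP (fun y => decide (y < x)) = 0 := by
      rw [List.countP_eq_zero]
      intro a ha
      obtain ⟨j, hj, rfl⟩ := List.mem_iff_getElem.mp ha
      have hj' : k + j < l.length := by simp only [List.length_drop] at hj; omega
      rw [List.getElem_drop]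
      simp only [decide_eq_true_eq, not_lt]
      calc x ≤ l[k] := hx
        _ ≤ l[k + j] := sorted_getElem_le hs (Nat.le_add_right k j) hj'
    have htake : (l.take k).countP (fun y => decide (y < x)) ≤ k := by
      calc (l.take k).countP (fun y => decide (y < x)) ≤ (l.take k).length :=
            List.countP_le_length
        _ ≤ k := by simp
    omega
  · intro h
    have hsplit : l.countP (fun y => decide (y < x)) =
        (l.take (k+1)).countP (fun y => decide (y < x)) +
        (l.drop (k+1)).countP (fun y => decide (y < x)) := by
      rw [← List.countP_append, List.take_append_drop]
    have hlen : (l.take (k+1)).length = k + 1 := by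
      rw [List.length_take]; omega
    have htake : (l.take (k+1)).countP (fun y => decide (y < x)) = (l.take (k+1)).length := by
      rw [List.countP_eq_length]
      intro a ha
      obtain ⟨j, hj, rfl⟩ := List.mem_iff_getElem.mp ha
      rw [hlen] at hj
      rw [List.getElem_take]
      simp only [decide_eq_true_eq]
      exact lt_of_le_of_lt (sorted_getElem_le hs (Nat.lt_succ_iff.mp hj) hk) h
    omega

theorem countP_gt_iff {l : List ℝ} (hs : l.Pairwise (· ≤ ·)) {k : ℕ} (hk : k < l.length)
    (x : ℝ) : l.length - k ≤ l.countP (fun y => decide (x < y)) ↔ x < l[k] := by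
  constructor
  · intro h
    by_contra hx
    push_neg at hx
    have hsplit : l.countP (fun y => decide (x < y)) =
        (l.take (k+1)).countP (fun y => decide (x < y)) +
        (l.drop (k+1)).countP (fun y => decide (x < y)) := by
      rw [← List.countP_append, List.take_append_drop]
    have htake : (l.take (k+1)).countP (fun y => decide (x < y)) = 0 := by
      rw [List.countP_eq_zero]
      intro a ha
      obtain ⟨j, hj, rfl⟩ := List.mem_iff_getElem.mp ha
      have hjk : j ≤ k := by rw [List.length_take] at hj; omega
      rw [List.getElem_take]
      simp only [decide_eq_true_eq, not_lt]
      exact le_trans (sorted_getElem_le hs hjk hk) hx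
    have hdrop : (l.drop (k+1)).countP (fun y => decide (x < y)) ≤ l.length - (k+1) := by
      calc _ ≤ (l.drop (k+1)).length := List.countP_le_length
        _ = l.length - (k+1) := by simp
    omega
  · intro h
    have hsplit : l.countP (fun y => decide (x < y)) =
        (l.take k).countP (fun y => decide (x < y)) +
        (l.drop k).countP (fun y => decide (x < y)) := by
      rw [← List.countP_append, List.take_append_drop]
    have hlen : (l.drop k).length = l.length - k := by simp
    have hdrop : (l.drop k).countP (fun y => decide (x < y)) = (l.drop k).length := by
      rw [List.countP_eq_length]
      intro a ha
      obtain ⟨j, hj, rfl⟩ := List.mem_iff_getElem.mp ha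
      have hj' : k + j < l.length := by simp only [List.length_drop] at hj; omega
      rw [List.getElem_drop]
      simp only [decide_eq_true_eq]
      exact lt_of_lt_of_le h (sorted_getElem_le hs (Nat.le_add_right k j) hj')
    omega

/-- for 1 ≤ p, 1 ≤ q, p + q ≤ n + 1, the p-th smallest lower endpoint is
strictly below the q-th largest upper endpoint, and f^{p,q}(S) is exactly the bounded
nonempty open interval between them. -/
theorem endpoint_rule_well_defined (n p q : ℕ) (hp : 1 ≤ p) (hq : 1 ≤ q)
    (hpq : p + q ≤ n + 1) (S : Fin n → OInt) :
    kthSmall (fun i => (S i).lo) p < kthLarge (fun i => (S i).hi) q ∧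
      eprSet p q S =
        Set.Ioo (kthSmall (fun i => (S i).lo) p) (kthLarge (fun i => (S i).hi) q) := by
  have hn : 1 ≤ n := by omega
  have hpn : p ≤ n := by omega
  have hqn : q ≤ n := by omega
  set a : Fin n → ℝ := fun i => (S i).lo with ha
  set b : Fin n → ℝ := fun i => (S i).hi with hb
  set la := List.insertionSort (· ≤ ·) (List.ofFn a) with hla
  set lb := List.insertionSort (· ≤ ·) (List.ofFn b) with hlb
  have hlena : la.length = n := by simp [hla]
  have hlenb : lb.length = n := by simp [hlb]
  have hsa : la.Pairwise (· ≤ ·) := List.pairwise_insertionSort _ _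
  have hsb : lb.Pairwise (· ≤ ·) := List.pairwise_insertionSort _ _
  have hka : p - 1 < la.length := by omega
  have hkb : n - q < lb.length := by omega
  have hKS : kthSmall a p = la[p-1] := List.getD_eq_getElem _ _ hka
  have hKL : kthLarge b q = lb[n-q] := List.getD_eq_getElem _ _ hkb
  -- Fact A
  have hA : ∀ x : ℝ, p ≤ lowCount S x ↔ la[p-1] < x := by
    intro x
    have h1 : lowCount S x = la.countP (fun y => decide (y < x)) := by
      rw [lowCount, card_eq_countP n a (fun y => y < x)]
      exact ((List.perm_insertionSort _ _).countP_eq _).symm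
    rw [h1, ← countP_lt_iff hsa hka x]
    omega
  -- Fact B
  have hB : ∀ x : ℝ, q ≤ highCount S x ↔ x < lb[n-q] := by
    intro x
    have h1 : highCount S x = lb.countP (fun y => decide (x < y)) := by
      rw [highCount, card_eq_countP n b (fun y => x < y)]
      exact ((List.perm_insertionSort _ _).countP_eq _).symm
    have hq' : n - (n - q) = q := by omega
    rw [h1, ← countP_gt_iff hsb hkb x, hlenb, hq']
  -- total count bound
  have hC : ∀ x : ℝ, n ≤ lowCount S x + highCount S x := by
    intro x
    have hsub : (Finset.univ : Finset (Fin n)) ⊆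
        (Finset.univ.filter fun i => (S i).lo < x) ∪
        (Finset.univ.filter fun i => x < (S i).hi) := by
      intro i _
      simp only [Finset.mem_union, Finset.mem_filter, Finset.mem_univ, true_and]
      by_contra hcon
      push_neg at hcon
      exact absurd (S i).lt (not_lt.mpr (le_trans hcon.2 hcon.1))
    calc n = (Finset.univ : Finset (Fin n)).card := (Finset.card_fin n).symm
      _ ≤ _ := Finset.card_le_card hsub
      _ ≤ _ := Finset.card_union_le _ _
  have hlt : la[p-1] < lb[n-q] := by
    by_contra hcon
    push_neg at hcon
    have h1 : lowCount S (lb[n-q]) < p := by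
      by_contra h; push_neg at h
      exact absurd ((hA _).mp h) (not_lt.mpr hcon)
    have h2 : highCount S (lb[n-q]) < q := by
      by_contra h; push_neg at h
      exact absurd ((hB _).mp h) (lt_irrefl _)
    have := hC (lb[n-q])
    omega
  refine ⟨by rw [hKS, hKL]; exact hlt, ?_⟩
  ext x
  simp only [eprSet, Set.mem_setOf_eq, Set.mem_Ioo, hKS, hKL, hA x, hB x]
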